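/- In the layered ring graph LR^k(2^m), there exists a nearest-neighbor traversal (with respect to graph distance, starting at backbone vertex b_0) of total cost exactly (k+1)(2^m + 1) − 1. -/

import Mathlib

/-- `a` and `b` are `L`-neighbors: `a < b` and `L ∩ {a, …, b} = {a, b}`. -/
def LNbr (L : Set ℕ) (a b : ℕ) : Prop := a < b ∧ L ∩ Set.Icc a b = {a, b}

/-- The layers of the layered ring graph `LR^k(2^m)`:
`L^1 = {0, 1, 2, 4, …, 2^(m-1), 2^m}` and
`L^(i+1) = {0} ∪ ⋃_{N^i(a,b)} {a + 2^t : 0 ≤ t ≤ log₂ (b - a)}`. -/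
def Lset (m : ℕ) : ℕ → Set ℕ
  | 0 => ∅
  | 1 => {0} ∪ {x | ∃ t ≤ m, x = 2 ^ t}
  | i + 2 => {0} ∪ {x | ∃ a b, LNbr (Lset m (i + 1)) a b ∧
      ∃ t ≤ Nat.log 2 (b - a), x = a + 2 ^ t}

/-- The vertices of `LR^k(2^m)`, encoded as pairs `(i, t)`: `(0, t)` is the backbone
vertex `b_t` (for `t ≤ 2^m`), and `(i, t)` with `1 ≤ i ≤ k` is the layer vertex `ℓ^i_t`
(for `t ∈ L^i`). The position of `(i, t)` is `t`. -/
def LRVertexSet (m k : ℕ) : Set (ℕ × ℕ) :=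
  {v | (v.1 = 0 ∧ v.2 ≤ 2 ^ m) ∨ (1 ≤ v.1 ∧ v.1 ≤ k ∧ v.2 ∈ Lset m v.1)}

/-- The layered ring graph `LR^k(2^m)`: two distinct vertices are adjacent iff their
positions differ by at most `1` modulo `2^m + 1`. -/
def LRGraph (m k : ℕ) : SimpleGraph (LRVertexSet m k) :=
  SimpleGraph.fromRel
    (fun u v => (u.val.2 + 1) % (2 ^ m + 1) = v.val.2 % (2 ^ m + 1) ∨ u.val.2 = v.val.2)


namespace LRAux


def pc : ℕ → ℕ
  | 0 => 0
  | n+1 => pc ((n+1)/2) + (n+1) % 2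
decreasing_by exact Nat.div_lt_self (Nat.succ_pos n) one_lt_two

lemma pc_zero : pc 0 = 0 := by rw [pc]

lemma pc_rec (n : ℕ) (h : n ≠ 0) : pc n = pc (n / 2) + n % 2 := by
  obtain ⟨k, rfl⟩ := Nat.exists_eq_succ_of_ne_zero h
  rw [pc]

lemma pc_two_mul (n : ℕ) : pc (2 * n) = pc n := by
  rcases Nat.eq_zero_or_pos n with rfl | h
  · rfl
  · rw [pc_rec (2 * n) (by omega)]
    simp [Nat.mul_div_cancel_left, Nat.mul_mod_right]

lemma pc_two_mul_add_one (n : ℕ) : pc (2 * n + 1) = pc n + 1 := by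
  rw [pc_rec (2 * n + 1) (by omega)]
  have h1 : (2 * n + 1) / 2 = n := by omega
  have h2 : (2 * n + 1) % 2 = 1 := by omega
  rw [h1, h2]

lemma pc_eq_zero_iff (n : ℕ) : pc n = 0 ↔ n = 0 := by
  induction n using Nat.strong_induction_on with
  | _ n ih =>
    rcases Nat.eq_zero_or_pos n with rfl | h
    · simp [pc_zero]
    · rw [pc_rec n (by omega)]
      constructor
      · intro hz
        have h1 : pc (n / 2) = 0 := by omega
        have h2 : n % 2 = 0 := by omega
        have := (ih (n / 2) (by omega)).mp h1
        omega
      · omega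

lemma pc_pow_mul (t n : ℕ) : pc (2 ^ t * n) = pc n := by
  induction t with
  | zero => simp
  | succ t ih =>
    have : 2 ^ (t + 1) * n = 2 * (2 ^ t * n) := by ring
    rw [this, pc_two_mul, ih]

lemma pc_one : pc 1 = 1 := by rw [pc_rec 1 one_ne_zero]; simp [pc_zero]

lemma pc_two_pow (t : ℕ) : pc (2 ^ t) = 1 := by
  have := pc_pow_mul t 1
  simpa [pc_one] using this

lemma pc_add (t a b : ℕ) (ha : 2 ^ t ∣ a) (hb : b < 2 ^ t) :
    pc (a + b) = pc a + pc b := by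
  induction t generalizing a b with
  | zero =>
    interval_cases b
    simp [pc_zero]
  | succ t ih =>
    obtain ⟨d, rfl⟩ := ha
    have hA : 2 ^ (t + 1) * d = 2 * (2 ^ t * d) := by ring
    rcases Nat.even_or_odd b with ⟨c, hc⟩ | ⟨c, hc⟩
    · subst hc
      have hcb : c < 2 ^ t := by
        have := Nat.pow_succ 2 t ▸ hb; omega
      have : 2 ^ (t + 1) * d + (c + c) = 2 * (2 ^ t * d + c) := by ring
      rw [this, pc_two_mul, ih _ _ ⟨d, rfl⟩ hcb, hA, pc_two_mul]
      have : c + c = 2 * c := by ring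
      rw [this, pc_two_mul]
    · subst hc
      have hcb : c < 2 ^ t := by
        have := Nat.pow_succ 2 t ▸ hb; omega
      have : 2 ^ (t + 1) * d + (2 * c + 1) = 2 * (2 ^ t * d + c) + 1 := by ring
      rw [this, pc_two_mul_add_one, ih _ _ ⟨d, rfl⟩ hcb, hA, pc_two_mul,
        pc_two_mul_add_one]
      ring

lemma pc_succ_le (n : ℕ) : pc (n + 1) ≤ pc n + 1 := by
  induction n using Nat.strong_induction_on with
  | _ n ih =>
    rcases Nat.even_or_odd n with ⟨c, hc⟩ | ⟨c, hc⟩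
    · subst hc
      have h1 : c + c = 2 * c := by ring
      have h2 : c + c + 1 = 2 * c + 1 := by ring
      rw [h2, pc_two_mul_add_one, h1, pc_two_mul]
    · subst hc
      have h2 : 2 * c + 1 + 1 = 2 * (c + 1) := by ring
      rw [h2, pc_two_mul, pc_two_mul_add_one]
      rcases Nat.eq_zero_or_pos c with rfl | hc
      · simp [pc_one, pc_zero]
      · have := ih c (by omega)
        omega

lemma pc_add_two_pow_le (t n : ℕ) : pc (n + 2 ^ t) ≤ pc n + 1 := by
  induction t generalizing n with
  | zero => simpa using pc_succ_le n
  | succ t ih =>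
    rcases Nat.even_or_odd n with ⟨c, hc⟩ | ⟨c, hc⟩
    · subst hc
      have : c + c + 2 ^ (t + 1) = 2 * (c + 2 ^ t) := by rw [Nat.pow_succ]; ring
      rw [this, pc_two_mul]
      have h1 : c + c = 2 * c := by ring
      rw [h1, pc_two_mul]
      exact ih c
    · subst hc
      have : 2 * c + 1 + 2 ^ (t + 1) = 2 * (c + 2 ^ t) + 1 := by rw [Nat.pow_succ]; ring
      rw [this, pc_two_mul_add_one, pc_two_mul_add_one]
      have := ih c
      omega

/-- 2-adic valuation -/
def v2 (n : ℕ) : ℕ := n.factorization 2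

lemma v2_dvd (n : ℕ) : 2 ^ v2 n ∣ n := Nat.ordProj_dvd n 2

lemma exists_c (a : ℕ) (h : a ≠ 0) :
    ∃ c, a = 2 ^ (v2 a + 1) * c + 2 ^ v2 a ∧ pc a = pc c + 1 := by
  have hnd := Nat.pow_succ_factorization_not_dvd h Nat.prime_two
  obtain ⟨q, hq⟩ := v2_dvd a
  set v := v2 a with hv
  have hodd : ¬ (2 ∣ q) := by
    rintro ⟨r, hr⟩
    have hd : 2 ^ (v + 1) ∣ a := ⟨r, by rw [hq, hr]; ring⟩
    exact hnd hd
  obtain ⟨c, hc⟩ : ∃ c, q = 2 * c + 1 := ⟨q / 2, by omega⟩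
  refine ⟨c, by rw [hq, hc]; ring, ?_⟩
  rw [hq, pc_pow_mul, hc, pc_two_mul_add_one]

lemma v2_pow_le (a : ℕ) (h : a ≠ 0) : 2 ^ v2 a ≤ a :=
  Nat.le_of_dvd (Nat.pos_of_ne_zero h) (v2_dvd a)




/-- successor function in the set `{x | pc x ≤ i}` -/
def succf (i a : ℕ) : ℕ := if pc a < i then a + 1 else a + 2 ^ v2 a

def Sset (m i : ℕ) : Set ℕ := {x | x ≤ 2 ^ m ∧ pc x ≤ i}

lemma succf_lt (i a : ℕ) : a < succf i a := by
  unfold succf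
  split
  · omega
  · have : 0 < 2 ^ v2 a := Nat.pow_pos (n := v2 a) (by norm_num)
    omega

lemma pc_pos (a : ℕ) (h : a ≠ 0) : 1 ≤ pc a := by
  have := pc_eq_zero_iff a
  omega

lemma gap_main (m i a : ℕ) (hi : 1 ≤ i) (ha : pc a ≤ i) (ham : a < 2 ^ m) :
    pc (succf i a) ≤ i ∧ succf i a ≤ 2 ^ m ∧
      ∀ t, a < t → t < succf i a → i < pc t := by
  unfold succf
  split
  · next h =>
    refine ⟨by have := pc_succ_le a; omega, by omega, ?_⟩
    intro t h1 h2
    omega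
  · next h =>
    have hpa : pc a = i := by omega
    have ha0 : a ≠ 0 := by
      intro h0
      rw [h0, pc_zero] at hpa
      omega
    obtain ⟨c, hc, hpc⟩ := exists_c a ha0
    set v := v2 a with hv
    have hvd : 2 ^ v ∣ a := hv ▸ v2_dvd a
    have h2v : 2 ^ (v + 1) = 2 * 2 ^ v := by ring
    have hpow : 0 < 2 ^ v := Nat.pow_pos (n := v) (by norm_num)
    have hvm : v < m := by
      have h1 : 2 ^ v ≤ a := v2_pow_le a ha0
      have : 2 ^ v < 2 ^ m := by omega
      exact (Nat.pow_lt_pow_iff_right (by norm_num : 1 < 2)).mp this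
    have hb : a + 2 ^ v = 2 ^ (v + 1) * (c + 1) := by rw [hc]; ring
    have hpcb : pc (a + 2 ^ v) ≤ i := by
      rw [hb, pc_pow_mul]
      have := pc_succ_le c
      omega
    have hble : a + 2 ^ v ≤ 2 ^ m := by
      obtain ⟨e, he⟩ : 2 ^ (v + 1) ∣ 2 ^ m := pow_dvd_pow 2 (by omega)
      by_contra hgt
      have hce : e < c + 1 := by
        by_contra hle
        have : 2 ^ (v + 1) * (c + 1) ≤ 2 ^ (v + 1) * e :=
          Nat.mul_le_mul_left _ (by omega)
        omega
      have h3 : 2 ^ (v + 1) * (e + 1) ≤ 2 ^ (v + 1) * (c + 1) :=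
        Nat.mul_le_mul_left _ (by omega)
      have hmul : 2 ^ (v + 1) * (e + 1) = 2 ^ (v + 1) * e + 2 ^ (v + 1) := by ring
      omega
    refine ⟨hpcb, hble, ?_⟩
    intro t h1 h2
    obtain ⟨r, hr⟩ : ∃ r, t = a + r := ⟨t - a, by omega⟩
    have hr1 : 0 < r ∧ r < 2 ^ v := by omega
    have : pc t = pc a + pc r := by rw [hr]; exact pc_add v a r hvd hr1.2
    have := pc_pos r (by omega)
    omega

lemma gap_back (i a : ℕ) (hi : 1 ≤ i) (ha : pc a = i) :
    2 ^ v2 a ≤ a ∧ ∀ t, a - 2 ^ v2 a < t → t < a → i ≤ pc t := by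
  have ha0 : a ≠ 0 := by
    intro h0
    rw [h0, pc_zero] at ha
    omega
  obtain ⟨c, hc, hpc⟩ := exists_c a ha0
  set v := v2 a with hv
  have hle : 2 ^ v ≤ a := v2_pow_le a ha0
  refine ⟨hle, ?_⟩
  intro t h1 h2
  have h2v : (2:ℕ) ^ (v + 1) = 2 * 2 ^ v := by ring
  have hav : a - 2 ^ v = 2 ^ (v + 1) * c := by omega
  obtain ⟨r, hr⟩ : ∃ r, t = (a - 2 ^ v) + r := ⟨t - (a - 2 ^ v), by omega⟩
  have hr1 : 0 < r ∧ r < 2 ^ v := by omega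
  have hd : 2 ^ v ∣ 2 ^ (v + 1) * c := ⟨2 * c, by ring⟩
  have hpt : pc t = pc c + pc r := by
    rw [hr, hav, pc_add v _ r hd hr1.2, pc_pow_mul]
  have := pc_pos r (by omega)
  omega

lemma lnbr_succf (m i a b : ℕ) (hi : 1 ≤ i) (h : LNbr (Sset m i) a b) :
    a ∈ Sset m i ∧ b = succf i a ∧ a < 2 ^ m := by
  obtain ⟨hab, hicc⟩ := h
  have ha : a ∈ Sset m i := by
    have : a ∈ Sset m i ∩ Set.Icc a b := by
      rw [hicc]; exact Set.mem_insert _ _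
    exact this.1
  have hb : b ∈ Sset m i := by
    have : b ∈ Sset m i ∩ Set.Icc a b := by
      rw [hicc]; exact Set.mem_insert_of_mem _ rfl
    exact this.1
  have hnone : ∀ t, a < t → t < b → t ∉ Sset m i := by
    intro t h1 h2 hmem
    have hmem2 : t ∈ Sset m i ∩ Set.Icc a b := ⟨hmem, by constructor <;> omega⟩
    rw [hicc] at hmem2
    rcases Set.mem_insert_iff.mp hmem2 with h' | h'
    · omega
    · rw [Set.mem_singleton_iff] at h'
      omega
  have ham : a < 2 ^ m := lt_of_lt_of_le hab hb.1
  obtain ⟨hs1, hs2, hs3⟩ := gap_main m i a hi ha.2 ham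
  refine ⟨ha, ?_, ham⟩
  rcases lt_trichotomy b (succf i a) with hlt | heq | hgt
  · exact absurd hb.2 (by have := hs3 b hab hlt; omega)
  · exact heq
  · exact absurd ⟨hs2, hs1⟩ (hnone _ (succf_lt i a) hgt)

lemma succf_lnbr (m i a : ℕ) (hi : 1 ≤ i) (ha : a ∈ Sset m i) (ham : a < 2 ^ m) :
    LNbr (Sset m i) a (succf i a) := by
  obtain ⟨hs1, hs2, hs3⟩ := gap_main m i a hi ha.2 ham
  refine ⟨succf_lt i a, ?_⟩
  ext t
  simp only [Set.mem_inter_iff, Set.mem_Icc, Set.mem_insert_iff, Set.mem_singleton_iff]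
  constructor
  · rintro ⟨hmem, h1, h2⟩
    rcases eq_or_lt_of_le h1 with h' | h1'
    · left; omega
    rcases eq_or_lt_of_le h2 with h' | h2'
    · right; omega
    exact absurd hmem.2 (by have := hs3 t h1' h2'; omega)
  · intro ht
    rcases ht with h | h
    · rw [h]
      exact ⟨ha, le_refl _, le_of_lt (succf_lt i a)⟩
    · rw [h]
      exact ⟨⟨hs2, hs1⟩, le_of_lt (succf_lt i a), le_refl _⟩

lemma lset_one (m : ℕ) : Lset m 1 = Sset m 1 := by
  ext x
  simp only [Lset, Set.mem_union, Set.mem_singleton_iff, Set.mem_setOf_eq]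
  constructor
  · rintro (rfl | ⟨t, ht, rfl⟩)
    · exact ⟨by positivity, by rw [pc_zero]; omega⟩
    · exact ⟨Nat.pow_le_pow_right (by norm_num) ht, by rw [pc_two_pow]⟩
  · rintro ⟨hx1, hx2⟩
    rcases Nat.eq_zero_or_pos x with rfl | hx
    · left; rfl
    right
    obtain ⟨c, hc, hpc⟩ := exists_c x (by omega)
    have hc0 : c = 0 := by
      have h1 := pc_pos x (by omega)
      have h2 : pc c = 0 := by omega
      exact (pc_eq_zero_iff c).mp h2
    rw [hc0] at hc
    simp at hc
    refine ⟨v2 x, ?_, hc⟩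
    have : 2 ^ v2 x ≤ 2 ^ m := by omega
    exact (Nat.pow_le_pow_iff_right (by norm_num : 1 < 2)).mp this

lemma lset_succ_eq (m i : ℕ) (hi : 1 ≤ i) :
    Lset m (i + 1) = {0} ∪ {x | ∃ a b, LNbr (Lset m i) a b ∧
      ∃ t ≤ Nat.log 2 (b - a), x = a + 2 ^ t} := by
  obtain ⟨j, rfl⟩ : ∃ j, i = j + 1 := ⟨i - 1, by omega⟩
  rfl

lemma v2_ge (a w : ℕ) (ha : a ≠ 0) (h : 2 ^ w ∣ a) : w ≤ v2 a :=
  (Nat.Prime.pow_dvd_iff_le_factorization Nat.prime_two ha).mp h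

lemma lset_char (m : ℕ) : ∀ i, 1 ≤ i → Lset m i = Sset m i := by
  intro i hi
  induction i, hi using Nat.le_induction with
  | base => exact lset_one m
  | succ i hi ih =>
    rw [lset_succ_eq m i hi, ih]
    ext x
    simp only [Set.mem_union, Set.mem_singleton_iff, Set.mem_setOf_eq]
    constructor
    · rintro (rfl | ⟨a, b, hlnbr, t, ht, rfl⟩)
      · exact ⟨by positivity, by rw [pc_zero]; omega⟩
      obtain ⟨ha, rfl, ham⟩ := lnbr_succf m i a _ hi hlnbr
      obtain ⟨hg1, hg2, _⟩ := gap_main m i a hi ha.2 ham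
      by_cases hcase : pc a < i
      · have hb : succf i a = a + 1 := by unfold succf; simp [hcase]
        rw [hb] at ht hg1 hg2
        have hlog : Nat.log 2 (a + 1 - a) = 0 := by
          have : a + 1 - a = 1 := by omega
          rw [this]
          simp
        rw [hlog] at ht
        have ht0 : t = 0 := by omega
        subst ht0
        have h20 : (2:ℕ) ^ 0 = 1 := by norm_num
        rw [h20]
        exact ⟨hg2, by omega⟩
      · have hple : pc a ≤ i := ha.2
        have hpa : pc a = i := by omega
        have hb : succf i a = a + 2 ^ v2 a := by unfold succf; simp [hcase]
        rw [hb] at ht hg1 hg2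
        have hwdvd : 2 ^ v2 a ∣ a := v2_dvd a
        set w := v2 a with hw
        have hlog : Nat.log 2 (a + 2 ^ w - a) = w := by
          rw [Nat.add_sub_cancel_left, Nat.log_pow (by norm_num : 1 < 2)]
        rw [hlog] at ht
        rcases eq_or_lt_of_le ht with heq | htlt
        · rw [heq]
          exact ⟨hg2, le_trans hg1 (Nat.le_succ i)⟩
        · have hdvd : 2 ^ (t + 1) ∣ a :=
            dvd_trans (pow_dvd_pow 2 (by omega)) hwdvd
          have hlt2 : (2:ℕ) ^ t < 2 ^ (t + 1) := by
            have h1 : (2:ℕ) ^ (t+1) = 2 * 2 ^ t := by ring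
            have h2 : 0 < (2:ℕ) ^ t := Nat.pow_pos (n := t) (by norm_num)
            omega
          have hpx : pc (a + 2 ^ t) = pc a + 1 := by
            rw [pc_add (t + 1) a _ hdvd hlt2, pc_two_pow]
          have hlt3 : (2:ℕ) ^ t < 2 ^ w :=
            Nat.pow_lt_pow_right (by norm_num) htlt
          exact ⟨by omega, by omega⟩
    · rintro ⟨hx1, hx2⟩
      rcases Nat.eq_zero_or_pos x with rfl | hx
      · left; rfl
      right
      by_cases hcase : pc x ≤ i
      · set P := (Finset.range x).filter (fun t => pc t ≤ i) with hP
        have hPne : P.Nonempty := ⟨0, by simp [hP, pc_zero]; omega⟩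
        set a := P.max' hPne with haa
        have haP : a ∈ P := P.max'_mem hPne
        have hax : a < x := Finset.mem_range.mp (Finset.mem_filter.mp haP).1
        have hpca : pc a ≤ i := (Finset.mem_filter.mp haP).2
        have haS : a ∈ Sset m i := ⟨by omega, hpca⟩
        have ham : a < 2 ^ m := by omega
        have hlnbr := succf_lnbr m i a hi haS ham
        obtain ⟨hs1, hs2, hs3⟩ := gap_main m i a hi hpca ham
        have hbx : succf i a = x := by
          rcases lt_trichotomy (succf i a) x with hlt | heq | hgt
          · exfalso
            have hmem : succf i a ∈ P := by
              simp only [hP, Finset.mem_filter, Finset.mem_range]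
              exact ⟨hlt, hs1⟩
            have := P.le_max' _ hmem
            have := succf_lt i a
            omega
          · exact heq
          · exact absurd hcase (by have := hs3 x hax hgt; omega)
        refine ⟨a, succf i a, hlnbr, ?_⟩
        have hcases : succf i a = a + 1 ∨ succf i a = a + 2 ^ v2 a := by
          unfold succf
          split
          · left; rfl
          · right; rfl
        rcases hcases with h' | h'
        · refine ⟨0, ?_, by rw [← hbx, h']; norm_num⟩
          rw [h']
          have h1 : a + 1 - a = 1 := by omega
          rw [h1]
          simp
        · refine ⟨v2 a, ?_, by rw [← hbx, h']⟩
          rw [h', Nat.add_sub_cancel_left, Nat.log_pow (by norm_num : 1 < 2)]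
      · have hpx : pc x = i + 1 := by omega
        obtain ⟨c, hc, hpc⟩ := exists_c x (by omega)
        set v := v2 x with hv
        set a := x - 2 ^ v with haa
        have hpow : 0 < 2 ^ v := Nat.pow_pos (n := v) (by norm_num)
        have hxa : x = a + 2 ^ v := by
          have : 2 ^ v ≤ x := v2_pow_le x (by omega)
          omega
        have h2v : (2:ℕ) ^ (v + 1) = 2 * 2 ^ v := by ring
        have hav : a = 2 ^ (v + 1) * c := by omega
        have hpca : pc a = i := by
          rw [hav, pc_pow_mul]; omega
        have ha0 : a ≠ 0 := by
          intro h0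
          rw [h0, pc_zero] at hpca
          omega
        have haS : a ∈ Sset m i := ⟨by omega, by omega⟩
        have ham : a < 2 ^ m := by omega
        have hlnbr := succf_lnbr m i a hi haS ham
        have hsucc : succf i a = a + 2 ^ v2 a := by
          unfold succf
          simp [hpca]
        have hva : v + 1 ≤ v2 a := v2_ge a (v + 1) ha0 ⟨c, hav⟩
        refine ⟨a, succf i a, hlnbr, v, ?_, hxa⟩
        rw [hsucc, Nat.add_sub_cancel_left, Nat.log_pow (by norm_num : 1 < 2)]
        omega


-- Stage 3: distance machinery
variable {m k : ℕ}

def cd (m p q : ℕ) : ℕ := min (max p q - min p q) (2 ^ m + 1 - (max p q - min p q))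

lemma two_le_pow (hm : 1 ≤ m) : 2 ≤ 2 ^ m := by
  calc 2 = 2 ^ 1 := by norm_num
  _ ≤ 2 ^ m := Nat.pow_le_pow_right (by norm_num) hm

lemma pos_le (v : LRVertexSet m k) : v.val.2 ≤ 2 ^ m := by
  have h := v.prop
  simp only [LRVertexSet, Set.mem_setOf_eq] at h
  rcases h with ⟨_, h⟩ | ⟨h1, _, h3⟩
  · exact h
  · rw [lset_char m v.val.1 h1] at h3
    exact h3.1

lemma adj_iff (u v : LRVertexSet m k) :
    (LRGraph m k).Adj u v ↔ u ≠ v ∧ cd m u.val.2 v.val.2 ≤ 1 := by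
  have hu := pos_le u
  have hv := pos_le v
  rw [LRGraph, SimpleGraph.fromRel_adj]
  have key : ∀ p q : ℕ, p ≤ 2 ^ m → q ≤ 2 ^ m →
      ((p + 1) % (2 ^ m + 1) = q % (2 ^ m + 1) ↔ (p + 1 = q ∨ (p = 2 ^ m ∧ q = 0))) := by
    intro p q hp hq
    have hq' : q % (2 ^ m + 1) = q := Nat.mod_eq_of_lt (by omega)
    rcases eq_or_lt_of_le hp with rfl | hp'
    · have : (2 ^ m + 1) % (2 ^ m + 1) = 0 := Nat.mod_self _
      rw [this, hq']
      omega
    · have : (p + 1) % (2 ^ m + 1) = p + 1 := Nat.mod_eq_of_lt (by omega)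
      rw [this, hq']
      omega
  constructor
  · rintro ⟨hne, h | h⟩ <;> refine ⟨hne, ?_⟩
    · rcases h with h | h
      · rw [key _ _ hu hv] at h
        unfold cd
        omega
      · unfold cd
        omega
    · rcases h with h | h
      · rw [key _ _ hv hu] at h
        unfold cd
        omega
      · unfold cd
        omega
  · rintro ⟨hne, h⟩
    refine ⟨hne, ?_⟩
    unfold cd at h
    set p := u.val.2
    set q := v.val.2
    rcases Nat.lt_trichotomy p q with h' | h' | h'
    · rcases (by omega : p + 1 = q ∨ (q = 2 ^ m ∧ p = 0)) with h'' | h''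
      · left; left; rw [key _ _ hu hv]; omega
      · right; left; rw [key _ _ hv hu]; omega
    · left; right; exact h'
    · rcases (by omega : q + 1 = p ∨ (p = 2 ^ m ∧ q = 0)) with h'' | h''
      · right; left; rw [key _ _ hv hu]; omega
      · left; left; rw [key _ _ hu hv]; omega

lemma walk_ge (u v : LRVertexSet m k) (w : (LRGraph m k).Walk u v) :
    cd m u.val.2 v.val.2 ≤ w.length := by
  induction w with
  | nil =>
    unfold cd
    simp
  | cons h w ih =>
    rename_i a b c
    rw [adj_iff] at h
    have h1 := h.2
    have hab := pos_le a
    have hbb := pos_le b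
    have hcb := pos_le c
    rw [SimpleGraph.Walk.length_cons]
    unfold cd at *
    omega

lemma step_lemma (hm : 1 ≤ m) (p q : ℕ) (hp : p ≤ 2 ^ m) (hq : q ≤ 2 ^ m)
    (h2 : 2 ≤ cd m p q) :
    ∃ p', p' ≤ 2 ^ m ∧ cd m p p' = 1 ∧ cd m p' q = cd m p q - 1 := by
  have hR := two_le_pow hm
  unfold cd at *
  rcases le_or_gt p q with h | h
  · rcases le_or_gt (q - p) (2 ^ m + 1 - (q - p)) with h' | h'
    · exact ⟨p + 1, by omega, by omega, by omega⟩
    · rcases Nat.eq_zero_or_pos p with rfl | hp0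
      · exact ⟨2 ^ m, by omega, by omega, by omega⟩
      · exact ⟨p - 1, by omega, by omega, by omega⟩
  · rcases le_or_gt (p - q) (2 ^ m + 1 - (p - q)) with h' | h'
    · exact ⟨p - 1, by omega, by omega, by omega⟩
    · rcases eq_or_lt_of_le hp with rfl | hp0
      · exact ⟨0, by omega, by omega, by omega⟩
      · exact ⟨p + 1, by omega, by omega, by omega⟩

lemma exists_walk_le (hm : 1 ≤ m) :
    ∀ d (u v : LRVertexSet m k), u ≠ v → cd m u.val.2 v.val.2 ≤ d →
      ∃ w : (LRGraph m k).Walk u v, w.length ≤ max 1 d := by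
  intro d
  induction d with
  | zero =>
    intro u v hne hcd
    have : (LRGraph m k).Adj u v := (adj_iff u v).mpr ⟨hne, by omega⟩
    exact ⟨SimpleGraph.Walk.cons this SimpleGraph.Walk.nil, by simp⟩
  | succ d ih =>
    intro u v hne hcd
    by_cases h1 : cd m u.val.2 v.val.2 ≤ 1
    · have : (LRGraph m k).Adj u v := (adj_iff u v).mpr ⟨hne, h1⟩
      exact ⟨SimpleGraph.Walk.cons this SimpleGraph.Walk.nil, by simp⟩
    · obtain ⟨p', hp1, hp2, hp3⟩ :=
        step_lemma hm u.val.2 v.val.2 (pos_le u) (pos_le v) (by omega)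
      have hmem : ((0, p') : ℕ × ℕ) ∈ LRVertexSet m k := Or.inl ⟨rfl, hp1⟩
      set b : LRVertexSet m k := ⟨(0, p'), hmem⟩ with hb
      have hub : u ≠ b := by
        intro heq
        rw [heq] at hp2
        unfold cd at hp2
        have hb2 : b.val.2 = p' := rfl
        omega
      have hadj : (LRGraph m k).Adj u b := (adj_iff u b).mpr ⟨hub, le_of_eq hp2⟩
      have hp3' : cd m b.val.2 v.val.2 = cd m u.val.2 v.val.2 - 1 := hp3
      have hbv : b ≠ v := by
        intro heq
        rw [heq] at hp3'
        have hzero : cd m v.val.2 v.val.2 = 0 := by unfold cd; simp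
        omega
      obtain ⟨w', hw'⟩ := ih b v hbv (by omega)
      refine ⟨SimpleGraph.Walk.cons hadj w', ?_⟩
      rw [SimpleGraph.Walk.length_cons]
      omega

lemma lr_reachable (hm : 1 ≤ m) (u v : LRVertexSet m k) : (LRGraph m k).Reachable u v := by
  rcases eq_or_ne u v with rfl | hne
  · exact SimpleGraph.Reachable.refl u
  · obtain ⟨w, _⟩ := exists_walk_le hm (cd m u.val.2 v.val.2) u v hne (le_refl _)
    exact ⟨w⟩

lemma dist_eq (hm : 1 ≤ m) (u v : LRVertexSet m k) (hne : u ≠ v) :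
    (LRGraph m k).dist u v = max 1 (cd m u.val.2 v.val.2) := by
  apply le_antisymm
  · obtain ⟨w, hw⟩ := exists_walk_le hm (cd m u.val.2 v.val.2) u v hne (le_refl _)
    exact le_trans (SimpleGraph.dist_le w) hw
  · have hreach := lr_reachable hm u v
    obtain ⟨w, hw⟩ := hreach.exists_walk_length_eq_dist
    have h1 : cd m u.val.2 v.val.2 ≤ (LRGraph m k).dist u v := hw ▸ walk_ge u v w
    have h2 : 1 ≤ (LRGraph m k).dist u v := by
      rcases Nat.eq_zero_or_pos ((LRGraph m k).dist u v) with h0 | h0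
      · rw [SimpleGraph.dist_eq_zero_iff_eq_or_not_reachable] at h0
        rcases h0 with h0 | h0
        · exact absurd h0 hne
        · exact absurd hreach h0
      · exact h0
    omega

-- Stage 4: the tour
def slist (m i : ℕ) : List ℕ := (List.range (2 ^ m + 1)).filter (fun t => pc t ≤ i)

def lay (m i : ℕ) : List (ℕ × ℕ) := (slist m i).map (fun t => (i, t))

def back (m : ℕ) : List (ℕ × ℕ) := (List.range (2 ^ m + 1)).map (fun t => (0, t))

def desc (m : ℕ) : ℕ → List (ℕ × ℕ)
  | 0 => []
  | i + 1 => lay m (i + 1) ++ desc m i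

def tour (m k : ℕ) : List (ℕ × ℕ) := back m ++ desc m k

def nxt (m k : ℕ) (u : ℕ × ℕ) : ℕ × ℕ :=
  if u.1 = 0 then (if u.2 < 2 ^ m then (0, u.2 + 1) else (k, 0))
  else (if u.2 < 2 ^ m then (u.1, succf u.1 u.2) else (u.1 - 1, 0))

def rnk (k i : ℕ) : ℕ := if i = 0 then 0 else k + 1 - i

def ord (m k : ℕ) (u : ℕ × ℕ) : ℕ := rnk k u.1 * (2 ^ m + 1) + u.2

def Rm (m k : ℕ) (u v : ℕ × ℕ) : Prop := v = nxt m k u ∧ ord m k u < ord m k v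

lemma mem_slist (i t : ℕ) : t ∈ slist m i ↔ t ≤ 2 ^ m ∧ pc t ≤ i := by
  simp [slist, List.mem_filter, Nat.lt_succ_iff, and_comm]

lemma slist_pairwise (i : ℕ) : List.Pairwise (· < ·) (slist m i) :=
  (List.pairwise_lt_range (n := _)).sublist List.filter_sublist

lemma chain_between (l : List ℕ) (hl : List.Pairwise (· < ·) l) :
    List.Chain' (fun a b => a < b ∧ ∀ t, a < t → t < b → t ∉ l) l := by
  rw [List.Chain', List.isChain_iff_getElem]
  intro j hj
  have hp := List.pairwise_iff_get.mp hl
  have hj1 : j + 1 < l.length := by omega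
  refine ⟨hp ⟨j, by omega⟩ ⟨j + 1, hj1⟩ (by simp), ?_⟩
  intro t h1 h2 hmem
  obtain ⟨⟨j', hj'⟩, rfl⟩ := List.mem_iff_get.mp hmem
  rcases lt_trichotomy j' j with h | h | h
  · have := hp ⟨j', hj'⟩ ⟨j, by omega⟩ (by simpa using h)
    simp only [List.get_eq_getElem] at *
    omega
  · subst h
    exact lt_irrefl _ h1
  · rcases lt_trichotomy j' (j + 1) with h' | h' | h'
    · omega
    · subst h'
      exact lt_irrefl _ h2
    · have := hp ⟨j + 1, hj1⟩ ⟨j', hj'⟩ (by simpa using h')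
      simp only [List.get_eq_getElem] at *
      omega

lemma chain_mem (l : List ℕ) : List.Chain' (fun a b => a ∈ l ∧ b ∈ l) l := by
  rw [List.Chain', List.isChain_iff_getElem]
  intro j hj
  exact ⟨List.getElem_mem _, List.getElem_mem _⟩

lemma chain_and {α : Type*} {R S : α → α → Prop} {l : List α}
    (h1 : List.Chain' R l) (h2 : List.Chain' S l) :
    List.Chain' (fun a b => R a b ∧ S a b) l := by
  rw [List.Chain', List.isChain_iff_getElem] at *
  exact fun j hj => ⟨h1 j hj, h2 j hj⟩

lemma chainS (i : ℕ) (hi : 1 ≤ i) :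
    List.Chain' (fun a b => a < 2 ^ m ∧ pc a ≤ i ∧ b = succf i a) (slist m i) := by
  have hc := chain_and (chain_between _ (slist_pairwise (m := m) i)) (chain_mem (slist m i))
  apply hc.imp
  rintro a b ⟨⟨hab, hbet⟩, hal, hbl⟩
  rw [mem_slist] at hal hbl
  have ham : a < 2 ^ m := by omega
  refine ⟨ham, hal.2, ?_⟩
  obtain ⟨hs1, hs2, hs3⟩ := gap_main m i a hi hal.2 ham
  rcases lt_trichotomy b (succf i a) with hlt | heq | hgt
  · have := hs3 b hab hlt
    omega
  · exact heq
  · exact absurd ((mem_slist i _).mpr ⟨hs2, hs1⟩) (hbet _ (succf_lt i a) hgt)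

lemma slist_head (i : ℕ) : (slist m i).head? = some 0 := by
  unfold slist
  rw [List.range_succ_eq_map]
  simp [pc_zero, List.filter_cons]

lemma slist_getLast (i : ℕ) (hi : 1 ≤ i) : (slist m i).getLast? = some (2 ^ m) := by
  unfold slist
  rw [List.range_succ, List.filter_append]
  have : List.filter (fun t => decide (pc t ≤ i)) [2 ^ m] = [2 ^ m] := by
    simp [pc_two_pow]
    omega
  rw [this, List.getLast?_concat]

lemma back_head : (back m).head? = some (0, 0) := by
  unfold back
  rw [List.range_succ_eq_map]
  simp

lemma back_getLast : (back m).getLast? = some (0, 2 ^ m) := by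
  unfold back
  rw [List.range_succ, List.map_append]
  simp

lemma lay_head (i : ℕ) : (lay m i).head? = some (i, 0) := by
  unfold lay
  rw [List.head?_map, slist_head]
  rfl

lemma lay_getLast (i : ℕ) (hi : 1 ≤ i) : (lay m i).getLast? = some (i, 2 ^ m) := by
  unfold lay
  rw [List.getLast?_map, slist_getLast i hi]
  rfl

lemma chain_back : List.Chain' (Rm m k) (back m) := by
  unfold back
  rw [List.Chain', List.isChain_map]
  have : List.Chain' (fun a b => b = a + 1 ∧ a < 2 ^ m) (List.range (2 ^ m + 1)) := by
    rw [List.Chain', List.isChain_iff_getElem]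
    intro j hj
    rw [List.length_range] at hj
    rw [List.getElem_range, List.getElem_range]
    omega
  apply this.imp
  rintro a b ⟨rfl, hab⟩
  constructor
  · simp [nxt, hab]
  · simp [ord, rnk]

lemma chain_lay (i : ℕ) (hi : 1 ≤ i) (hik : i ≤ k) : List.Chain' (Rm m k) (lay m i) := by
  unfold lay
  rw [List.Chain', List.isChain_map]
  apply (chainS i hi).imp
  rintro a b ⟨ham, hpc, rfl⟩
  constructor
  · simp only [nxt]
    have h1 : i ≠ 0 := by omega
    simp [h1, ham]
  · simp only [ord, rnk]
    have h1 : i ≠ 0 := by omega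
    simp [h1]
    exact succf_lt i a

lemma desc_head (i : ℕ) (hi : 1 ≤ i) : (desc m i).head? = some (i, 0) := by
  obtain ⟨j, rfl⟩ : ∃ j, i = j + 1 := ⟨i - 1, by omega⟩
  show (lay m (j + 1) ++ desc m j).head? = some (j + 1, 0)
  rw [List.head?_append]
  rw [lay_head]
  rfl

lemma chain_desc (i : ℕ) (hik : i ≤ k) : List.Chain' (Rm m k) (desc m i) := by
  induction i with
  | zero => exact List.isChain_nil
  | succ i ih =>
    show List.Chain' (Rm m k) (lay m (i + 1) ++ desc m i)
    rw [List.Chain', List.isChain_append]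
    refine ⟨chain_lay (i + 1) (by omega) hik, ih (by omega), ?_⟩
    intro x hx y hy
    rw [lay_getLast (i + 1) (by omega)] at hx
    have hi1 : 1 ≤ i := by
      rcases Nat.eq_zero_or_pos i with rfl | h
      · simp [desc] at hy
      · exact h
    rw [desc_head i hi1] at hy
    simp only [Option.mem_def, Option.some_inj] at hx hy
    subst hx
    subst hy
    constructor
    · simp [nxt]
    · simp only [ord, rnk]
      have h1 : i + 1 ≠ 0 := by omega
      have h2 : i ≠ 0 := by omega
      simp [h1, h2]
      have h3 : k + 1 - i = (k - i) + 1 := by omega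
      rw [h3]
      have h5 : (k - i + 1) * (2 ^ m + 1) = (k - i) * (2 ^ m + 1) + (2 ^ m + 1) := by ring
      omega

lemma chain_tour : List.Chain' (Rm m k) (tour m k) := by
  unfold tour
  rw [List.Chain', List.isChain_append]
  refine ⟨chain_back, chain_desc k (le_refl k), ?_⟩
  intro x hx y hy
  rw [back_getLast] at hx
  have hk1 : 1 ≤ k := by
    rcases Nat.eq_zero_or_pos k with rfl | h
    · simp [desc] at hy
    · exact h
  rw [desc_head k hk1] at hy
  simp only [Option.mem_def, Option.some_inj] at hx hy
  subst hx
  subst hy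
  constructor
  · simp [nxt]
  · simp only [ord, rnk]
    have h1 : k ≠ 0 := by omega
    have h2 : k + 1 - k = 1 := by omega
    simp [h1, h2]

lemma mem_desc (i : ℕ) (u : ℕ × ℕ) :
    u ∈ desc m i ↔ ∃ j, 1 ≤ j ∧ j ≤ i ∧ u ∈ lay m j := by
  induction i with
  | zero =>
    simp [desc]
  | succ i ih =>
    show u ∈ lay m (i + 1) ++ desc m i ↔ _
    rw [List.mem_append, ih]
    constructor
    · rintro (h | ⟨j, h1, h2, h3⟩)
      · exact ⟨i + 1, by omega, by omega, h⟩
      · exact ⟨j, h1, by omega, h3⟩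
    · rintro ⟨j, h1, h2, h3⟩
      rcases Nat.eq_or_lt_of_le h2 with rfl | h
      · left; exact h3
      · right; exact ⟨j, h1, by omega, h3⟩

lemma mem_tour (u : ℕ × ℕ) :
    u ∈ tour m k ↔ (u.1 = 0 ∧ u.2 ≤ 2 ^ m) ∨
      (1 ≤ u.1 ∧ u.1 ≤ k ∧ u.2 ≤ 2 ^ m ∧ pc u.2 ≤ u.1) := by
  unfold tour
  rw [List.mem_append, mem_desc]
  constructor
  · rintro (h | ⟨j, h1, h2, h3⟩)
    · unfold back at h
      obtain ⟨t, ht, rfl⟩ := List.mem_map.mp h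
      rw [List.mem_range] at ht
      left
      exact ⟨rfl, by omega⟩
    · unfold lay at h3
      obtain ⟨t, ht, rfl⟩ := List.mem_map.mp h3
      rw [mem_slist] at ht
      right
      exact ⟨h1, by omega, ht.1, ht.2⟩
  · rintro (⟨h1, h2⟩ | ⟨h1, h2, h3, h4⟩)
    · left
      unfold back
      rw [List.mem_map]
      exact ⟨u.2, by rw [List.mem_range]; omega, by rw [← h1]⟩
    · right
      refine ⟨u.1, h1, h2, ?_⟩
      unfold lay
      rw [List.mem_map]
      exact ⟨u.2, (mem_slist _ _).mpr ⟨h3, h4⟩, rfl⟩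

lemma pairwise_tour : List.Pairwise (fun u v => ord m k u < ord m k v) (tour m k) := by
  haveI : IsTrans (ℕ × ℕ) (fun u v => ord m k u < ord m k v) :=
    ⟨fun _ _ _ h1 h2 => lt_trans h1 h2⟩
  rw [← List.isChain_iff_pairwise]
  exact (chain_tour (m := m) (k := k)).imp (fun _ _ h => h.2)

lemma nodup_tour : (tour m k).Nodup := by
  apply (pairwise_tour (m := m) (k := k)).imp
  intro u v h heq
  subst heq
  exact lt_irrefl _ h

lemma tour_ne_nil : tour m k ≠ [] := by
  unfold tour back
  simp

lemma tour_head : (tour m k).head? = some (0, 0) := by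
  unfold tour
  rw [List.head?_append, back_head]
  rfl

-- Stage 5: costs and NN key lemma
def dval (u v : ℕ × ℕ) : ℕ := if u.2 < v.2 then v.2 - u.2 else 1

def costF {α : Type*} (f : α → α → ℕ) : List α → ℕ
  | [] => 0
  | [_] => 0
  | a :: b :: l => f a b + costF f (b :: l)

lemma costF_cons₂ {α : Type*} (f : α → α → ℕ) (a b : α) (l : List α) :
    costF f (a :: b :: l) = f a b + costF f (b :: l) := by
  rfl

lemma sum_range_eq_costF {α : Type*} (f : α → α → ℕ) (d : α) :
    ∀ l : List α,
      ∑ j ∈ Finset.range (l.length - 1), f (l.getD j d) (l.getD (j + 1) d) = costF f l := by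
  intro l
  induction l with
  | nil => simp [costF]
  | cons a t ih =>
    cases t with
    | nil => simp [costF]
    | cons b t' =>
      rw [costF_cons₂, ← ih]
      have hlen : (a :: b :: t').length - 1 = ((b :: t').length - 1) + 1 := by
        simp
      rw [hlen, Finset.sum_range_succ']
      simp only [List.getD_cons_succ, List.getD_cons_zero]
      omega

lemma costF_append {α : Type*} (f : α → α → ℕ) :
    ∀ (l₁ l₂ : List α) (a b : α), l₁.getLast? = some a → l₂.head? = some b →
      costF f (l₁ ++ l₂) = costF f l₁ + f a b + costF f l₂ := by
  intro l₁
  induction l₁ with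
  | nil => intro l₂ a b h1 h2; simp at h1
  | cons x t ih =>
    intro l₂ a b h1 h2
    cases t with
    | nil =>
      simp at h1
      subst h1
      cases l₂ with
      | nil => simp at h2
      | cons y t₂ =>
        simp only [List.head?_cons, Option.some_inj] at h2
        subst h2
        simp only [List.singleton_append, costF_cons₂]
        show f x y + costF f (y :: t₂) = costF f [x] + f x y + costF f (y :: t₂)
        simp [costF]
    | cons z t' =>
      rw [List.getLast?_cons_cons] at h1
      have := ih l₂ a b h1 h2
      simp only [List.cons_append, costF_cons₂] at *
      rw [this]
      ring

lemma costF_congr {α : Type*} (f g : α → α → ℕ) (R : α → α → Prop)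
    (hfg : ∀ a b, R a b → f a b = g a b) :
    ∀ l : List α, List.Chain' R l → costF f l = costF g l := by
  intro l
  induction l with
  | nil => intro; rfl
  | cons a t ih =>
    cases t with
    | nil => intro; rfl
    | cons b t' =>
      intro h
      rw [List.Chain', List.isChain_cons_cons] at h
      rw [costF_cons₂, costF_cons₂, hfg a b h.1, ih h.2]

lemma costF_map {α β : Type*} (f : α → α → ℕ) (g : β → α) :
    ∀ l : List β, costF f (l.map g) = costF (fun a b => f (g a) (g b)) l := by
  intro l
  induction l with
  | nil => rfl
  | cons a t ih =>
    cases t with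
    | nil => rfl
    | cons b t' =>
      simp only [List.map_cons] at *
      rw [costF_cons₂, costF_cons₂, ih]

lemma telescope : ∀ (l : List ℕ) (x : ℕ), List.Chain' (· < ·) (x :: l) →
    costF (fun a b => b - a) (x :: l) = (x :: l).getLast (by simp) - x ∧
      x ≤ (x :: l).getLast (by simp) := by
  intro l
  induction l with
  | nil =>
    intro x _
    simp [costF]
  | cons y t ih =>
    intro x h
    rw [List.Chain', List.isChain_cons_cons] at h
    obtain ⟨hxy, h2⟩ := h
    obtain ⟨ih1, ih2⟩ := ih y h2
    have hlast : (x :: y :: t).getLast (by simp) = (y :: t).getLast (by simp) :=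
      List.getLast_cons (by simp)
    rw [hlast, costF_cons₂, ih1]
    omega

lemma costF_sub_eq (l : List ℕ) (h : List.Chain' (· < ·) l) (h0 : l.head? = some 0)
    (hN : l.getLast? = some (2 ^ m)) : costF (fun a b => b - a) l = 2 ^ m := by
  cases l with
  | nil => simp at h0
  | cons x t =>
    simp only [List.head?_cons, Option.some_inj] at h0
    subst h0
    have hlast : (0 :: t).getLast (by simp) = 2 ^ m := by
      have := List.getLast?_eq_getLast (l := 0 :: t) (by simp)
      rw [this] at hN
      exact Option.some_inj.mp hN
    obtain ⟨h1, _⟩ := telescope t 0 h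
    rw [h1, hlast]
    omega

lemma costF_back : costF dval (back m) = 2 ^ m := by
  unfold back
  rw [costF_map]
  have hchain : List.Chain' (· < ·) (List.range (2 ^ m + 1)) := by
    rw [List.Chain', List.isChain_iff_getElem]
    intro j hj
    rw [List.length_range] at hj
    rw [List.getElem_range, List.getElem_range]
    omega
  rw [costF_congr _ (fun a b => b - a) (· < ·) ?hfg _ hchain]
  · apply costF_sub_eq _ hchain
    · rw [List.range_succ_eq_map]
      rfl
    · rw [List.range_succ, List.getLast?_concat]
  · intro a b hab
    simp only [dval]
    rw [if_pos hab]

lemma costF_lay (i : ℕ) (hi : 1 ≤ i) : costF dval (lay m i) = 2 ^ m := by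
  unfold lay
  rw [costF_map]
  have hchain : List.Chain' (· < ·) (slist m i) := by
    rw [List.Chain', List.isChain_iff_pairwise]
    exact slist_pairwise i
  rw [costF_congr _ (fun a b => b - a) (· < ·) ?hfg _ hchain]
  · exact costF_sub_eq _ hchain (slist_head i) (slist_getLast i hi)
  · intro a b hab
    simp only [dval]
    rw [if_pos hab]

lemma dval_junction (i j : ℕ) : dval (i, 2 ^ m) (j, 0) = 1 := by
  simp [dval]

lemma costF_desc (i : ℕ) (hi : 1 ≤ i) :
    costF dval (desc m i) = i * 2 ^ m + (i - 1) := by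
  induction i with
  | zero => omega
  | succ i ih =>
    rcases Nat.eq_zero_or_pos i with rfl | hi'
    · show costF dval (lay m 1 ++ desc m 0) = _
      show costF dval (lay m 1 ++ []) = _
      rw [List.append_nil, costF_lay 1 (le_refl 1)]
      simp
    · show costF dval (lay m (i + 1) ++ desc m i) = _
      have hne : desc m i ≠ [] := by
        have := desc_head (m := m) i hi'
        intro h
        rw [h] at this
        simp at this
      rw [costF_append dval _ _ (i + 1, 2 ^ m) (i, 0) (lay_getLast (i + 1) (by omega))
        (desc_head i hi'), costF_lay (i + 1) (by omega), ih hi', dval_junction]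
      have : (i + 1) * 2 ^ m = i * 2 ^ m + 2 ^ m := by ring
      omega

lemma costF_tour : costF dval (tour m k) = (k + 1) * 2 ^ m + k := by
  unfold tour
  rcases Nat.eq_zero_or_pos k with rfl | hk
  · show costF dval (back m ++ []) = _
    rw [List.append_nil, costF_back]
    simp
  · rw [costF_append dval _ _ (0, 2 ^ m) (k, 0) back_getLast (desc_head k hk),
      costF_back, costF_desc k hk, dval_junction]
    have : (k + 1) * 2 ^ m = k * 2 ^ m + 2 ^ m := by ring
    omega

lemma nxt_backbone_lt (a : ℕ) (hlt : a < 2 ^ m) : nxt m k (0, a) = (0, a + 1) := by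
  simp [nxt, hlt]

lemma nxt_backbone_end : nxt m k (0, 2 ^ m) = (k, 0) := by
  simp [nxt]

lemma nxt_layer_lt (i a : ℕ) (hi : i ≠ 0) (hlt : a < 2 ^ m) :
    nxt m k (i, a) = (i, succf i a) := by
  simp [nxt, hi, hlt]

lemma nxt_layer_end (i : ℕ) (hi : i ≠ 0) : nxt m k (i, 2 ^ m) = (i - 1, 0) := by
  simp [nxt, hi]

lemma ord_backbone (t : ℕ) : ord m k (0, t) = t := by
  simp [ord, rnk]

lemma ord_layer (i t : ℕ) (hi : i ≠ 0) :
    ord m k (i, t) = (k + 1 - i) * (2 ^ m + 1) + t := by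
  simp [ord, rnk, hi]

lemma consec_cd (hm : 1 ≤ m) (u : ℕ × ℕ) (hu : u ∈ tour m k) :
    u ≠ nxt m k u ∧ max 1 (cd m u.2 (nxt m k u).2) = dval u (nxt m k u) := by
  rw [mem_tour] at hu
  have hR := two_le_pow (m := m) hm
  obtain ⟨i, a⟩ := u
  rcases hu with ⟨h1, h2⟩ | ⟨h1, h2, h3, h4⟩
  · subst h1
    by_cases hlt : a < 2 ^ m
    · rw [nxt_backbone_lt a hlt]
      constructor
      · intro he
        rw [Prod.mk.injEq] at he
        omega
      · simp only [cd, dval]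
        split_ifs <;> omega
    · have h2m : a = 2 ^ m := by omega
      subst h2m
      rw [nxt_backbone_end]
      constructor
      · intro he
        rw [Prod.mk.injEq] at he
        omega
      · simp only [cd, dval]
        split_ifs <;> omega
  · by_cases hlt : a < 2 ^ m
    · rw [nxt_layer_lt i a (by omega) hlt]
      obtain ⟨hs1, hs2, hs3⟩ := gap_main m i a h1 h4 hlt
      have hlt2 := succf_lt i a
      have hgap : succf i a ≤ a + a + 1 := by
        have h4' : pc a ≤ i := h4
        have hcases : succf i a = a + 1 ∨ (pc a = i ∧ succf i a = a + 2 ^ v2 a) := by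
          unfold succf
          split
          · left; rfl
          · right; exact ⟨by omega, rfl⟩
        rcases hcases with h' | ⟨h', h''⟩
        · omega
        · have := (gap_back i a h1 h').1
          omega
      constructor
      · intro he
        rw [Prod.mk.injEq] at he
        omega
      · simp only [cd, dval]
        split_ifs <;> omega
    · have h2m : a = 2 ^ m := by omega
      subst h2m
      rw [nxt_layer_end i (by omega)]
      constructor
      · intro he
        rw [Prod.mk.injEq] at he
        omega
      · simp only [cd, dval]
        split_ifs <;> omega

lemma nn_key (hm : 1 ≤ m) (u x : ℕ × ℕ) (hu : u ∈ tour m k) (hx : x ∈ tour m k)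
    (hord : ord m k u < ord m k x) :
    dval u (nxt m k u) ≤ max 1 (cd m u.2 x.2) := by
  by_cases htriv : dval u (nxt m k u) ≤ 1
  · exact le_trans htriv (le_max_left _ _)
  rw [mem_tour] at hu hx
  have hR := two_le_pow (m := m) hm
  obtain ⟨i, a⟩ := u
  obtain ⟨i', t⟩ := x
  have hi1 : 1 ≤ i := by
    rcases hu with ⟨h1, h2⟩ | ⟨h1, _⟩
    · exfalso
      apply htriv
      subst h1
      by_cases hlt : a < 2 ^ m
      · rw [nxt_backbone_lt a hlt]
        simp only [dval]
        split_ifs <;> omega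
      · have h2m : a = 2 ^ m := by omega
        subst h2m
        rw [nxt_backbone_end]
        simp only [dval]
        split_ifs <;> omega
    · exact h1
  obtain ⟨h2, h3, h4⟩ : i ≤ k ∧ a ≤ 2 ^ m ∧ pc a ≤ i := by
    rcases hu with ⟨h1', _⟩ | h
    · omega
    · exact ⟨h.2.1, h.2.2.1, h.2.2.2⟩
  have hlt : a < 2 ^ m := by
    by_contra h
    apply htriv
    have h2m : a = 2 ^ m := by omega
    subst h2m
    rw [nxt_layer_end i (by omega)]
    simp only [dval]
    split_ifs <;> omega
  rw [nxt_layer_lt i a (by omega) hlt] at htriv ⊢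
  have hpa : pc a = i := by
    by_contra h
    apply htriv
    have hsa : succf i a = a + 1 := by
      unfold succf
      rw [if_pos (by omega)]
    rw [hsa]
    simp only [dval]
    split_ifs <;> omega
  have hsucc : succf i a = a + 2 ^ v2 a := by
    unfold succf
    rw [if_neg (by omega)]
  obtain ⟨hs1, hs2, hs3⟩ := gap_main m i a hi1 h4 hlt
  obtain ⟨hb1, hb2⟩ := gap_back i a hi1 hpa
  rw [hsucc] at hs2 hs3
  set g := 2 ^ v2 a with hg
  have h0g : 0 < g := Nat.pow_pos (by norm_num)
  have hdval : dval (i, a) (i, succf i a) = g := by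
    rw [hsucc]
    simp only [dval]
    split_ifs <;> omega
  rw [hdval]
  have hx' : 1 ≤ i' ∧ i' ≤ k ∧ t ≤ 2 ^ m ∧ pc t ≤ i' := by
    rcases hx with ⟨h1', h2'⟩ | h
    · exfalso
      subst h1'
      rw [ord_backbone, ord_layer i a (by omega)] at hord
      have hr1 : 1 ≤ k + 1 - i := by omega
      have hmul : 1 * (2 ^ m + 1) ≤ (k + 1 - i) * (2 ^ m + 1) :=
        Nat.mul_le_mul_right _ hr1
      omega
    · exact h
  obtain ⟨hx1, hx2, hx3, hx4⟩ := hx'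
  show g ≤ max 1 (cd m a t)
  by_cases heq : i' = i
  · subst heq
    rw [ord_layer i' a (by omega), ord_layer i' t (by omega)] at hord
    have hta : a < t := by omega
    have htge : a + g ≤ t := by
      by_contra hc
      have := hs3 t hta (by omega)
      omega
    simp only [cd]
    omega
  · have hii : i' < i := by
      rw [ord_layer i a (by omega), ord_layer i' t (by omega)] at hord
      by_contra hc
      have hgt : i < i' := by omega
      have hr : k + 1 - i' + 1 ≤ k + 1 - i := by omega
      have hmul : (k + 1 - i' + 1) * (2 ^ m + 1) ≤ (k + 1 - i) * (2 ^ m + 1) :=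
        Nat.mul_le_mul_right _ hr
      have hexp : (k + 1 - i' + 1) * (2 ^ m + 1) =
          (k + 1 - i') * (2 ^ m + 1) + (2 ^ m + 1) := by ring
      omega
    have hpt : pc t < i := by omega
    have hne : t ≠ a := by
      intro h
      rw [h] at hpt
      omega
    rcases Nat.lt_or_ge a t with hta | hta
    · have htge : a + g ≤ t := by
        by_contra hc
        have := hs3 t hta (by omega)
        omega
      simp only [cd]
      omega
    · have hta' : t < a := by omega
      have htle : t ≤ a - g := by
        by_contra hc
        have := hb2 t (by omega) hta'
        omega
      simp only [cd]
      omega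

lemma tour_mem_V (u : ℕ × ℕ) (hu : u ∈ tour m k) : u ∈ LRVertexSet m k := by
  rw [mem_tour] at hu
  rcases hu with ⟨h1, h2⟩ | ⟨h1, h2, h3, h4⟩
  · exact Or.inl ⟨h1, h2⟩
  · exact Or.inr ⟨h1, h2, by rw [lset_char m u.1 h1]; exact ⟨h3, h4⟩⟩

lemma V_mem_tour (u : ℕ × ℕ) (hu : u ∈ LRVertexSet m k) : u ∈ tour m k := by
  rw [mem_tour]
  rcases hu with ⟨h1, h2⟩ | ⟨h1, h2, h3⟩
  · exact Or.inl ⟨h1, h2⟩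
  · rw [lset_char m u.1 h1] at h3
    exact Or.inr ⟨h1, h2, h3.1, h3.2⟩

end LRAux

/-- In the layered ring graph `LR^k(2^m)` (`m ≥ 1`) there is a
nearest-neighbor traversal with respect to graph distance, starting at the backbone
vertex `b_0`, whose total cost (sum of distances between consecutive visited vertices)
is exactly `(k+1) * (2^m + 1) - 1`. -/
theorem lr_nn_traversal_cost (m k : ℕ) (hm : 1 ≤ m) :
    ∃ (n : ℕ) (g : ℕ → LRVertexSet m k),
      Function.Bijective (fun i : Fin n => g i) ∧
      (g 0).val = (0, 0) ∧
      (∀ i : ℕ, i + 1 < n → ∀ x : LRVertexSet m k, (∀ t : ℕ, t ≤ i → g t ≠ x) →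
        (LRGraph m k).dist (g i) (g (i + 1)) ≤ (LRGraph m k).dist (g i) x) ∧
      ∑ i ∈ Finset.range (n - 1), (LRGraph m k).dist (g i) (g (i + 1)) =
        (k + 1) * (2 ^ m + 1) - 1 := by
  classical
  set L := LRAux.tour m k with hL
  have hmemD : ∀ j : ℕ, L.getD j (0, 0) ∈ LRVertexSet m k := by
    intro j
    by_cases hj : j < L.length
    · rw [List.getD_eq_getElem _ _ hj]
      exact LRAux.tour_mem_V _ (List.getElem_mem _)
    · rw [List.getD_eq_default _ _ (by omega)]
      exact Or.inl ⟨rfl, by positivity⟩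
  set g : ℕ → LRVertexSet m k := fun j => ⟨L.getD j (0, 0), hmemD j⟩ with hg
  have hgval : ∀ (j : ℕ) (hj : j < L.length), (g j).val = L.get ⟨j, hj⟩ := by
    intro j hj
    show L.getD j (0, 0) = _
    rw [List.getD_eq_getElem _ _ hj, List.get_eq_getElem]
  have hchain : List.Chain' (LRAux.Rm m k) L := by
    rw [hL]; exact LRAux.chain_tour
  have hpairwise : List.Pairwise (fun u v => LRAux.ord m k u < LRAux.ord m k v) L := by
    rw [hL]; exact LRAux.pairwise_tour
  have hnodup : L.Nodup := by rw [hL]; exact LRAux.nodup_tour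
  have hpw := List.pairwise_iff_get.mp hpairwise
  -- distance between consecutive elements
  have hdist_consec : ∀ (j : ℕ) (hj1 : j + 1 < L.length),
      (LRGraph m k).dist (g j) (g (j + 1)) =
        LRAux.dval (L.get ⟨j, by omega⟩) (L.get ⟨j + 1, hj1⟩) := by
    intro j hj1
    have hj0 : j < L.length := by omega
    have hRm : LRAux.Rm m k (L.get ⟨j, by omega⟩) (L.get ⟨j + 1, hj1⟩) :=
      List.isChain_iff_getElem.mp hchain j (by omega)
    have hne : g j ≠ g (j + 1) := by
      intro h
      have hval := congrArg Subtype.val h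
      rw [hgval j hj0, hgval (j + 1) hj1] at hval
      have := hRm.2
      rw [hval] at this
      exact lt_irrefl _ this
    rw [LRAux.dist_eq hm _ _ hne]
    have h1 : (g j).val = L.get ⟨j, hj0⟩ := hgval j hj0
    have h2 : (g (j + 1)).val = L.get ⟨j + 1, hj1⟩ := hgval (j + 1) hj1
    rw [h1, h2, hRm.1]
    exact (LRAux.consec_cd hm _ (List.get_mem _ _)).2
  refine ⟨L.length, g, ⟨?_, ?_⟩, ?_, ?_, ?_⟩
  · -- injective
    intro i j hij
    have hval := congrArg Subtype.val hij
    rw [hgval i i.isLt, hgval j j.isLt] at hval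
    have : (⟨(i : ℕ), i.isLt⟩ : Fin L.length) = ⟨(j : ℕ), j.isLt⟩ :=
      (hnodup.get_inj_iff).mp hval
    exact Fin.ext (congrArg Fin.val this)
  · -- surjective
    intro x
    have hx : x.val ∈ L := LRAux.V_mem_tour x.val x.prop
    obtain ⟨jx, hjx⟩ := List.mem_iff_get.mp hx
    refine ⟨⟨jx, jx.isLt⟩, ?_⟩
    apply Subtype.ext
    rw [hgval jx jx.isLt]
    simpa using hjx
  · -- starts at (0,0)
    have hne := LRAux.tour_ne_nil (m := m) (k := k)
    rw [← hL] at hne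
    have hhead := LRAux.tour_head (m := m) (k := k)
    rw [← hL] at hhead
    cases hLc : L with
    | nil => exact absurd hLc hne
    | cons a t =>
      rw [hLc] at hhead
      simp only [List.head?_cons, Option.some_inj] at hhead
      show L.getD 0 (0, 0) = (0, 0)
      rw [hLc, List.getD_cons_zero, hhead]
  · -- nearest neighbor property
    intro j hj1 x hx
    have hj0 : j < L.length := by omega
    have hRm : LRAux.Rm m k (L.get ⟨j, by omega⟩) (L.get ⟨j + 1, hj1⟩) :=
      List.isChain_iff_getElem.mp hchain j (by omega)
    have hxmem : x.val ∈ L := LRAux.V_mem_tour x.val x.prop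
    obtain ⟨jx, hjx⟩ := List.mem_iff_get.mp hxmem
    have hjxgt : j < (jx : ℕ) := by
      by_contra hc
      apply hx jx (by omega)
      apply Subtype.ext
      rw [hgval jx jx.isLt]
      exact hjx
    have hord : LRAux.ord m k (L.get ⟨j, hj0⟩) < LRAux.ord m k x.val := by
      rw [← hjx]
      exact hpw ⟨j, hj0⟩ jx (by simp [Fin.lt_def]; omega)
    have hnex : g j ≠ x := by
      intro h
      have hval := congrArg Subtype.val h
      rw [hgval j hj0] at hval
      rw [hval] at hord
      exact lt_irrefl _ hord
    rw [hdist_consec j hj1, LRAux.dist_eq hm _ _ hnex, hgval j hj0, hRm.1]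
    exact LRAux.nn_key hm _ x.val (List.get_mem _ _)
      (LRAux.V_mem_tour x.val x.prop) hord
  · -- total cost
    have hterm : ∀ j ∈ Finset.range (L.length - 1),
        (LRGraph m k).dist (g j) (g (j + 1)) =
          LRAux.dval (L.getD j (0, 0)) (L.getD (j + 1) (0, 0)) := by
      intro j hj
      rw [Finset.mem_range] at hj
      have hj1 : j + 1 < L.length := by omega
      have hj0 : j < L.length := by omega
      rw [hdist_consec j hj1, List.getD_eq_getElem _ _ hj0, List.getD_eq_getElem _ _ hj1,
        List.get_eq_getElem, List.get_eq_getElem]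
    rw [Finset.sum_congr rfl hterm, LRAux.sum_range_eq_costF, hL, LRAux.costF_tour]
    have hexp : (k + 1) * (2 ^ m + 1) = (k + 1) * 2 ^ m + (k + 1) := by ring
    omega
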